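/- arXiv:2201.06178 — 4 statements merged into one kernel-verified Lean document; each statement's English description precedes it below -/
import Mathlib

section
/- Let H be a Hilbert space, 𝔸 + 𝔹 + τ𝕂 : H → H invertible for some fixed τ > 0, and let ℛ : L²(∂D∖Γ) → L²(∂D∖Γ) map θ to the trace h_θ|_{∂D∖Γ} where h_θ solves ((𝔸+𝔹+τ𝕂)h_θ, φ) = ∫_{∂D∖Γ} θ φ̄ dS for all φ ∈ H. Then λ ∈ ℂ is an eigenvalue of the problem (𝔸+𝔹+λ𝕂)h = 0, h ≠ 0, if and only if (−λ+τ)ℛθ = θ for some nonzero θ ∈ L²(∂D∖Γ); i.e. 1/(τ−λ) is an eigenvalue of the compact operator ℛ. -/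
/-- With `𝔸+𝔹+τ𝕂` invertible and `ℛ = t ∘ S` the (compact) solution operator
on `L²(∂D∖Γ)`, `λ` is an eigenvalue of `(𝔸+𝔹+λ𝕂)h = 0, h ≠ 0` iff `(τ−λ)ℛθ = θ` for some
nonzero `θ`; i.e. `1/(τ−λ)` is an eigenvalue of the compact operator `ℛ`. -/
theorem stmt_5
    {H G : Type*} [NormedAddCommGroup H] [InnerProductSpace ℂ H] [CompleteSpace H]
    [NormedAddCommGroup G] [InnerProductSpace ℂ G] [CompleteSpace G]
    (A B K : H →L[ℂ] H)
    (t : H →L[ℂ] G)  -- trace map V₀(D) → L²(∂D∖Γ), compact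
    (ht : IsCompactOperator ⇑t)
    (hKdef : ∀ h φ : H, (inner ℂ φ (K h) : ℂ) = (inner ℂ (t φ) (t h) : ℂ))
    (τ : ℝ) (hτ : 0 < τ)
    (Tinv : H →L[ℂ] H)
    (hTinv₁ : Tinv.comp (A + B + (τ : ℂ) • K) = ContinuousLinearMap.id ℂ H)
    (hTinv₂ : (A + B + (τ : ℂ) • K).comp Tinv = ContinuousLinearMap.id ℂ H)
    (S : G →L[ℂ] H)  -- solution operator θ ↦ h_θ
    (hS : ∀ (θ : G) (φ : H),
      (inner ℂ φ ((A + B + (τ : ℂ) • K) (S θ)) : ℂ) = (inner ℂ (t φ) θ : ℂ))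
    (R : G →L[ℂ] G) (hR : R = t.comp S) :  -- ℛ : θ ↦ h_θ|_{∂D∖Γ}
    IsCompactOperator ⇑R ∧
    ∀ lam : ℂ,
      (∃ h : H, h ≠ 0 ∧ (A + B + lam • K) h = 0) ↔
      (∃ θ : G, θ ≠ 0 ∧ ((τ : ℂ) - lam) • R θ = θ) := by
  set T := A + B + (τ : ℂ) • K with hT
  -- K = t† ∘ t
  have hK : ∀ h : H, K h = ContinuousLinearMap.adjoint t (t h) := by
    intro h
    refine ext_inner_left ℂ fun φ => ?_
    rw [hKdef, ContinuousLinearMap.adjoint_inner_right]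
  -- T ∘ S = t†
  have hTS : ∀ θ : G, T (S θ) = ContinuousLinearMap.adjoint t θ := by
    intro θ
    refine ext_inner_left ℂ fun φ => ?_
    rw [hS, ContinuousLinearMap.adjoint_inner_right]
  have hinv₁ : ∀ h : H, Tinv (T h) = h := by
    intro h
    have := congrArg (fun f => f h) hTinv₁
    simpa using this
  have hTapply : ∀ (lam : ℂ) (h : H),
      (A + B + lam • K) h = T h + (lam - (τ : ℂ)) • K h := by
    intro lam h
    simp only [hT, ContinuousLinearMap.add_apply, ContinuousLinearMap.smul_apply,
      sub_smul]
    abel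
  constructor
  · rw [hR]
    have := ht.comp_clm S
    exact this
  · intro lam
    constructor
    · rintro ⟨h, hne, heq⟩
      refine ⟨t h, ?_, ?_⟩
      · intro hth
        apply hne
        have hKh : K h = 0 := by rw [hK, hth, map_zero]
        have hTh : T h = 0 := by
          have := hTapply lam h
          rw [heq, hKh, smul_zero, add_zero] at this
          exact this.symm
        have := hinv₁ h
        rw [hTh, map_zero] at this
        exact this.symm
      · -- (τ - lam) • R (t h) = t h
        have hTh : T h = ((τ : ℂ) - lam) • K h := by
          have := hTapply lam h
          rw [heq] at this
          have : T h + (lam - (τ : ℂ)) • K h = 0 := this.symm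
          have := eq_neg_of_add_eq_zero_left this
          rw [this, ← neg_smul, neg_sub]
        have hSth : S (t h) = Tinv (K h) := by
          have h1 : T (S (t h)) = K h := by rw [hTS, hK]
          have := hinv₁ (S (t h))
          rw [h1] at this
          exact this.symm
        rw [hR]
        simp only [ContinuousLinearMap.coe_comp', Function.comp_apply]
        rw [hSth, ← map_smul, ← map_smul, ← hTh, hinv₁]
    · rintro ⟨θ, hθne, hθeq⟩
      refine ⟨((τ : ℂ) - lam) • S θ, ?_, ?_⟩
      · intro hzero
        apply hθne
        have h1 : ((τ : ℂ) - lam) • ContinuousLinearMap.adjoint t θ = 0 := by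
          rw [← hTS, ← map_smul, hzero, map_zero]
        have h2 : ((τ : ℂ) - lam) • S θ = 0 := hzero
        have hRθ : R θ = t (S θ) := by
          rw [hR]; simp [ContinuousLinearMap.coe_comp', Function.comp_apply]
        have h3 : θ = t (((τ : ℂ) - lam) • S θ) := by
          rw [map_smul, ← hRθ, hθeq]
        rw [h3, h2, map_zero]
      · rw [hTapply]
        have hKh : K (((τ : ℂ) - lam) • S θ) = ContinuousLinearMap.adjoint t θ := by
          have hRθ : R θ = t (S θ) := by
            rw [hR]; simp [ContinuousLinearMap.coe_comp', Function.comp_apply]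
          rw [hK, map_smul, map_smul, ← map_smul, ← hRθ, hθeq]
        rw [hKh, map_smul, hTS]
        rw [← add_smul]
        simp
end

section
/- Under the assumptions that β is real-valued (so the associated operator ℛ on L²(∂D∖Γ) is compact and self-adjoint), all eigenvalues λ of the eigenvalue problem (𝔸+𝔹+λ𝕂)h = 0 are real, and there is an infinite sequence {λ_j}_{j≥1} of real eigenvalues with |λ_j| → ∞, since the nonzero eigenvalues 1/(τ−λ_j) of the compact self-adjoint operator ℛ are real, form an infinite sequence, and accumulate only at 0. -/
local notation "⟪" x ", " y "⟫" => @inner ℂ _ _ x y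

/-- If `β` is real so that `ℛ` is compact and self-adjoint, all eigenvalues `λ`
of the problem are real, and there is an infinite sequence of real eigenvalues with
`|λ_j| → ∞` (the eigenvalues `1/(τ−λ_j)` of `ℛ` are real and accumulate only at `0`). -/
theorem stmt_6
    {G : Type*} [NormedAddCommGroup G] [InnerProductSpace ℂ G] [CompleteSpace G]
    (R : G →L[ℂ] G) (hRc : IsCompactOperator ⇑R) (hRsa : IsSelfAdjoint R)
    (τ : ℝ)
    (P : ℂ → Prop)  -- "λ is an eigenvalue of (𝔸+𝔹+λ𝕂)h = 0, h ≠ 0"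
    (hcorr : ∀ lam : ℂ, P lam ↔ ∃ θ : G, θ ≠ 0 ∧ ((τ : ℂ) - lam) • R θ = θ)
    (hinf : {lam : ℂ | P lam}.Infinite) :  -- ℛ has infinitely many nonzero eigenvalues
    (∀ lam : ℂ, P lam → lam.im = 0) ∧
    ∃ f : ℕ → ℂ, (∀ n, P (f n) ∧ (f n).im = 0) ∧
      Filter.Tendsto (fun n => ‖f n‖) Filter.atTop Filter.atTop := by
  have hsym : ∀ x y : G, ⟪R x, y⟫ = ⟪x, R y⟫ := fun x y => hRsa.isSymmetric x y
  -- Part 1: all eigenvalues are real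
  have key : ∀ lam : ℂ, P lam → lam.im = 0 := by
    intro lam hl
    obtain ⟨θ, hθ0, hθ⟩ := (hcorr lam).1 hl
    set c : ℂ := (τ : ℂ) - lam with hc
    have h1 : (starRingEnd ℂ) c * ⟪R θ, θ⟫ = ⟪θ, θ⟫ := by
      calc (starRingEnd ℂ) c * ⟪R θ, θ⟫ = ⟪c • R θ, θ⟫ := (inner_smul_left _ _ _).symm
        _ = ⟪θ, θ⟫ := by rw [hθ]
    have hinner : ⟪R θ, θ⟫ ≠ 0 := fun h =>
      hθ0 (inner_self_eq_zero.mp (by rw [← h1, h, mul_zero]))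
    have h2 : c * ⟪R θ, θ⟫ = ⟪θ, θ⟫ := by
      calc c * ⟪R θ, θ⟫ = ⟪θ, c • R θ⟫ := by rw [inner_smul_right, hsym θ θ]
        _ = ⟪θ, θ⟫ := by rw [hθ]
    have hcc : (starRingEnd ℂ) c = c := mul_right_cancel₀ hinner (h1.trans h2.symm)
    have hcim : c.im = 0 := Complex.conj_eq_iff_im.mp hcc
    simpa [hc, Complex.sub_im] using hcim
  refine ⟨key, ?_⟩
  -- Part 2: finiteness of the eigenvalue set in each ball
  have hfin : ∀ M : ℝ, {lam : ℂ | P lam ∧ ‖lam‖ ≤ M}.Finite := by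
    intro M
    rw [← Set.not_infinite]
    intro hSinf
    set g := hSinf.natEmbedding with hg
    set lamf : ℕ → ℂ := fun n => (g n : ℂ) with hlamf
    have hlam_inj : Function.Injective lamf := fun m n h => g.injective (Subtype.ext h)
    have hP : ∀ n, P (lamf n) := fun n => (g n).2.1
    have hMle : ∀ n, ‖lamf n‖ ≤ M := fun n => (g n).2.2
    set c : ℕ → ℂ := fun n => (τ : ℂ) - lamf n with hcdef
    have hc_inj : Function.Injective c := by
      intro m n h
      apply hlam_inj
      have h' : (τ : ℂ) - lamf m = (τ : ℂ) - lamf n := h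
      linear_combination -h' 
    have hex : ∀ n, ∃ e : G, ‖e‖ = 1 ∧ c n • R e = e := by
      intro n
      obtain ⟨θ, hθ0, hθ⟩ := (hcorr (lamf n)).1 (hP n)
      refine ⟨((‖θ‖⁻¹ : ℝ) : ℂ) • θ, ?_, ?_⟩
      · rw [norm_smul]
        simp [norm_ne_zero_iff.mpr hθ0, abs_of_nonneg, inv_mul_cancel₀,
          (norm_pos_iff.mpr hθ0).le]
      · rw [map_smul, smul_comm, hθ]
    choose e he1 he2 using hex
    have hc0 : ∀ n, c n ≠ 0 := by
      intro n h
      have := he2 n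
      rw [h, zero_smul] at this
      have h1 := he1 n
      rw [← this, norm_zero] at h1
      norm_num at h1
    have hcreal : ∀ n, (starRingEnd ℂ) (c n) = c n := by
      intro n
      apply Complex.conj_eq_iff_im.mpr
      simp [hcdef, Complex.sub_im, key _ (hP n)]
    have hRe : ∀ n, R (e n) = (c n)⁻¹ • e n := by
      intro n
      conv_lhs => rw [← inv_smul_smul₀ (hc0 n) (R (e n))]
      rw [he2 n]
    have horth : ∀ m n, m ≠ n → ⟪e m, e n⟫ = 0 := by
      intro m n hmn
      have h1 : ⟪e m, e n⟫ = c m * ((c n)⁻¹ * ⟪e m, e n⟫) := by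
        conv_lhs => rw [← he2 m]
        rw [inner_smul_left, hcreal m, hsym (e m) (e n), hRe n, inner_smul_right]
      have h2 : (c m * (c n)⁻¹ - 1) * ⟪e m, e n⟫ = 0 := by linear_combination -h1
      rcases mul_eq_zero.mp h2 with h | h
      · exact absurd ((mul_inv_eq_one₀ (hc0 n)).mp (sub_eq_zero.mp h))
          (fun hcc => hmn (hc_inj hcc))
      · exact h
    -- norm bounds
    have hcle : ∀ n, ‖c n‖ ≤ |τ| + M := by
      intro n
      have h1 : ‖c n‖ ≤ ‖((τ : ℂ))‖ + ‖lamf n‖ := by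
        simpa using norm_sub_le ((τ : ℂ)) (lamf n)
      rw [Complex.norm_real, Real.norm_eq_abs] at h1
      linarith [hMle n]
    have htauM : 0 < |τ| + M := lt_of_lt_of_le (norm_pos_iff.mpr (hc0 0)) (hcle 0)
    set ε : ℝ := (|τ| + M)⁻¹ with hε
    have hεpos : 0 < ε := inv_pos.mpr htauM
    have hRnorm : ∀ n, ε ≤ ‖R (e n)‖ := by
      intro n
      rw [hRe n, norm_smul, he1 n, mul_one]
      have : ‖(c n)⁻¹‖ = (‖c n‖)⁻¹ := by
        rw [norm_inv]
      rw [this]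
      exact inv_anti₀ (norm_pos_iff.mpr (hc0 n)) (hcle n)
    have hsep : ∀ m n, m ≠ n → ε ≤ ‖R (e m) - R (e n)‖ := by
      intro m n hmn
      have ho : ⟪R (e m), R (e n)⟫ = 0 := by
        rw [hRe m, hRe n, inner_smul_left, inner_smul_right, horth m n hmn]
        ring
      have hsq : ‖R (e m) - R (e n)‖ ^ 2 = ‖R (e m)‖ ^ 2 + ‖R (e n)‖ ^ 2 := by
        rw [norm_sub_sq (𝕜 := ℂ), ho]
        simp
      nlinarith [hRnorm m, hRnorm n, norm_nonneg (R (e m) - R (e n)), hεpos]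
    -- compactness contradiction
    have hRc' : IsCompactOperator ⇑(R : G →ₗ[ℂ] G) := hRc
    obtain ⟨K, hKc, hKsub⟩ := hRc'.image_closedBall_subset_compact 1
    have hmem : ∀ n, R (e n) ∈ K := fun n =>
      hKsub ⟨e n, mem_closedBall_zero_iff.mpr (he1 n).le, rfl⟩
    obtain ⟨x, -, φ, hφ, hconv⟩ := hKc.tendsto_subseq hmem
    have hcseq : CauchySeq ((fun n => R (e n)) ∘ φ) := hconv.cauchySeq
    rw [Metric.cauchySeq_iff] at hcseq
    obtain ⟨N, hN⟩ := hcseq ε hεpos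
    have hd := hN N le_rfl (N + 1) (Nat.le_succ N)
    simp only [Function.comp_apply, dist_eq_norm] at hd
    have hne : φ N ≠ φ (N + 1) := fun h => by
      have := hφ.injective h; omega
    exact absurd hd (not_lt.mpr (hsep _ _ hne))
  -- assemble the sequence
  have hchoice : ∀ n : ℕ, ∃ lam : ℂ, P lam ∧ (n : ℝ) ≤ ‖lam‖ := by
    intro n
    by_contra h
    push_neg at h
    exact hinf ((hfin n).subset fun lam hl => ⟨hl, (h lam hl).le⟩)
  choose f hf1 hf2 using hchoice
  exact ⟨f, fun n => ⟨hf1 n, key _ (hf1 n)⟩,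
    Filter.tendsto_atTop_mono hf2 tendsto_natCast_atTop_atTop⟩
end

section
/- Assume β real, Im(β)=0, and assume k² is not an eigenvalue of the problem Δu + k²u = 0 in D, ∂u/∂ν = −(1/4)(−∇_Γ·μ∇_Γ + k²β + 4/α)u on Γ, u = 0 on ∂D∖Γ. Then the eigenvalue problem (with Robin parameter λ on ∂D∖Γ) has at most finitely many positive eigenvalues λ. Proof strategy: if λ_j → +∞ with normalized eigenfunctions ‖h_j‖_{H¹(D)} + ‖h_j‖_{H¹(Γ)} = 1, the variational identity forces h_j → 0 in L²(∂D∖Γ), a weak limit h solves the excluded problem so h = 0, and then the identity forces ‖∇h_j‖_{L²(D)}, ‖∇_Γ h_j‖_{L²(Γ)} → 0, contradicting normalization. -/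
/-- Assume `β` real (self-adjoint setting) and that `k²` is not an eigenvalue
of the excluded mixed Dirichlet/generalized-impedance problem (abstractly: no nonzero `h`
with `(𝔸+𝔹)h = 0` and vanishing trace on `∂D∖Γ`). Then the eigenvalue problem
`(𝔸+𝔹+λ𝕂)h = 0` has at most finitely many positive eigenvalues `λ`. -/
theorem stmt_7
    {H G : Type*} [NormedAddCommGroup H] [InnerProductSpace ℂ H] [CompleteSpace H]
    [NormedAddCommGroup G] [InnerProductSpace ℂ G] [CompleteSpace G]
    (A B K : H →L[ℂ] H)
    (t : H →L[ℂ] G) (ht : IsCompactOperator ⇑t)  -- compact trace onto L²(∂D∖Γ)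
    (c : ℝ) (hc : 0 < c)
    (hAcoer : ∀ h : H, c * ‖h‖ ^ 2 ≤ (inner ℂ h (A h) : ℂ).re)
    (hAsa : IsSelfAdjoint A) (hBsa : IsSelfAdjoint B) (hKsa : IsSelfAdjoint K)
    (hBc : IsCompactOperator ⇑B)
    (hKdef : ∀ h φ : H, (inner ℂ φ (K h) : ℂ) = (inner ℂ (t φ) (t h) : ℂ))
    -- k² is not an eigenvalue of the excluded problem:
    (hexcl : ¬ ∃ h : H, h ≠ 0 ∧ (A + B) h = 0 ∧ t h = 0) :
    {lam : ℝ | 0 < lam ∧ ∃ h : H, h ≠ 0 ∧ (A + B + (lam : ℂ) • K) h = 0}.Finite := by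
  by_contra hfin
  have hinf : {lam : ℝ | 0 < lam ∧ ∃ h : H, h ≠ 0 ∧ (A + B + (lam : ℂ) • K) h = 0}.Infinite :=
    hfin
  set e := Set.Infinite.natEmbedding _ hinf with he
  set lam : ℕ → ℝ := fun n => (e n : ℝ) with hlamdef
  have hlaminj : Function.Injective lam := fun m n hmn => e.injective (Subtype.ext hmn)
  have hlampos : ∀ n, 0 < lam n := fun n => (e n).2.1
  have hex : ∀ n, ∃ x : H, x ≠ 0 ∧ (A + B + (lam n : ℂ) • K) x = 0 := fun n => (e n).2.2
  choose h hh0 hheq using hex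
  -- basic consequences
  have hTeq : ∀ n, (A + B) (h n) = -((lam n : ℂ) • K (h n)) := by
    intro n
    have h1 := hheq n
    rw [ContinuousLinearMap.add_apply, ContinuousLinearMap.smul_apply] at h1
    exact eq_neg_of_add_eq_zero_left h1
  have hKz : ∀ x : H, t x = 0 → K x = 0 := by
    intro x hx
    refine ext_inner_left ℂ fun v => ?_
    rw [hKdef, hx, inner_zero_right, inner_zero_right]
  have htne : ∀ n, t (h n) ≠ 0 := by
    intro n hn
    exact hexcl ⟨h n, hh0 n, by rw [hTeq n, hKz _ hn, smul_zero, neg_zero], hn⟩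
  have hKsymm : ∀ x y : H, (inner ℂ (K x) y : ℂ) = inner ℂ (t x) (t y) :=
    fun x y =>
      calc (inner ℂ (K x) y : ℂ) = starRingEnd ℂ (inner ℂ y (K x)) := (inner_conj_symm _ _).symm
        _ = starRingEnd ℂ (inner ℂ (t y) (t x)) := by rw [hKdef]
        _ = inner ℂ (t x) (t y) := inner_conj_symm _ _
  -- orthogonality of traces
  have horth : ∀ m n, m ≠ n → (inner ℂ (t (h m)) (t (h n)) : ℂ) = 0 := by
    intro m n hmn
    have h1 : (inner ℂ (h m) ((A + B) (h n)) : ℂ)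
        = -(lam n : ℂ) * inner ℂ (t (h m)) (t (h n)) := by
      rw [hTeq n, inner_neg_right, inner_smul_right, hKdef]; ring
    have h2 : (inner ℂ ((A + B) (h m)) (h n) : ℂ)
        = -(lam m : ℂ) * inner ℂ (t (h m)) (t (h n)) := by
      rw [hTeq m, inner_neg_left, inner_smul_left, hKsymm]
      simp [Complex.conj_ofReal]
    have h3 : (inner ℂ ((A + B) (h m)) (h n) : ℂ) = inner ℂ (h m) ((A + B) (h n)) := by
      have := (hAsa.add hBsa).isSymmetric (h m) (h n)
      simpa [inner_add_left, inner_add_right] using this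
    have h5 := h2.symm.trans (h3.trans h1)
    have h6 : ((lam m : ℂ) - (lam n : ℂ)) * inner ℂ (t (h m)) (t (h n)) = 0 := by
      linear_combination -h5
    rcases mul_eq_zero.mp h6 with h7 | h7
    · exfalso
      apply hmn
      apply hlaminj
      have : (lam m : ℂ) = (lam n : ℂ) := by linear_combination h7
      exact_mod_cast this
    · exact h7
  -- key quadratic form identity on finite combinations
  have hkey : ∀ (s : Finset ℕ) (g : ℕ → ℂ),
      (inner ℂ (∑ i ∈ s, g i • h i) ((A + B) (∑ i ∈ s, g i • h i)) : ℂ)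
        = -((∑ i ∈ s, lam i * ‖g i‖ ^ 2 * ‖t (h i)‖ ^ 2 : ℝ) : ℂ) := by
    intro s g
    set v : H := ∑ i ∈ s, g i • h i with hv
    have htv : t v = ∑ j ∈ s, g j • t (h j) := by
      rw [hv, map_sum]
      exact Finset.sum_congr rfl fun j _ => by rw [map_smul]
    have hterm : ∀ i ∈ s, (inner ℂ (t v) (t (h i)) : ℂ)
        = starRingEnd ℂ (g i) * (‖t (h i)‖ : ℂ) ^ 2 := by
      intro i hi
      rw [htv, sum_inner]
      rw [Finset.sum_eq_single i]
      · rw [inner_smul_left, inner_self_eq_norm_sq_to_K]; norm_cast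
      · intro j hj hji
        rw [inner_smul_left, horth j i hji, mul_zero]
      · intro hnot; exact absurd hi hnot
    have hAv : (A + B) v = ∑ i ∈ s, g i • (-((lam i : ℂ) • K (h i))) := by
      rw [hv, map_sum]
      exact Finset.sum_congr rfl fun i _ => by rw [map_smul, hTeq i]
    rw [hAv, inner_sum]
    have hterms : ∀ i ∈ s, (inner ℂ v (g i • (-((lam i : ℂ) • K (h i)))) : ℂ)
        = -((lam i * ‖g i‖ ^ 2 * ‖t (h i)‖ ^ 2 : ℝ) : ℂ) := by
      intro i hi
      rw [inner_smul_right, inner_neg_right, inner_smul_right, hKdef, hterm i hi]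
      have hgc : g i * (starRingEnd ℂ) (g i) = ((‖g i‖ ^ 2 : ℝ) : ℂ) := by
        rw [RCLike.mul_conj]; norm_cast
      push_cast at hgc ⊢
      linear_combination (-(lam i : ℂ) * (‖t (h i)‖ : ℂ) ^ 2) * hgc
    rw [Finset.sum_congr rfl hterms]
    push_cast
    rw [Finset.sum_neg_distrib]
  -- linear independence of the eigenvectors
  have hlin : LinearIndependent ℂ h := by
    rw [linearIndependent_iff']
    intro s g hg i hi
    have h1 := hkey s g
    rw [hg] at h1
    simp only [map_zero, inner_zero_left] at h1
    have h2 : (∑ i ∈ s, lam i * ‖g i‖ ^ 2 * ‖t (h i)‖ ^ 2 : ℝ) = 0 := by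
      exact_mod_cast neg_eq_zero.mp h1.symm
    have h3 := (Finset.sum_eq_zero_iff_of_nonneg (fun j _ =>
      mul_nonneg (mul_nonneg (hlampos j).le (sq_nonneg _)) (sq_nonneg _))).mp h2 i hi
    have h4 : 0 < ‖t (h i)‖ := norm_pos_iff.mpr (htne i)
    have h5 : ‖g i‖ = 0 := by
      by_contra hgi
      have hgp : 0 < ‖g i‖ := lt_of_le_of_ne (norm_nonneg _) (Ne.symm hgi)
      have hpos : 0 < lam i * ‖g i‖ ^ 2 * ‖t (h i)‖ ^ 2 :=
        mul_pos (mul_pos (hlampos i) (pow_pos hgp 2)) (pow_pos h4 2)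
      linarith
    exact norm_eq_zero.mp h5
  -- quadratic form is nonpositive on the span
  have hspan : ∀ v ∈ Submodule.span ℂ (Set.range h), (inner ℂ v ((A + B) v) : ℂ).re ≤ 0 := by
    intro v hv
    obtain ⟨g, rfl⟩ := Finsupp.mem_span_range_iff_exists_finsupp.mp hv
    rw [Finsupp.sum, hkey g.support g]
    have hnn : (0 : ℝ) ≤ ∑ i ∈ g.support, lam i * ‖g i‖ ^ 2 * ‖t (h i)‖ ^ 2 :=
      Finset.sum_nonneg fun i _ =>
        mul_nonneg (mul_nonneg (hlampos i).le (sq_nonneg _)) (sq_nonneg _)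
    rw [Complex.neg_re, Complex.ofReal_re]
    linarith
  -- Gram-Schmidt: an orthonormal sequence in the span
  set u : ℕ → H := InnerProductSpace.gramSchmidtNormed ℂ h with hu
  have huon : Orthonormal ℂ u := InnerProductSpace.gramSchmidtNormed_orthonormal hlin
  have hnorm1 : ∀ n, ‖u n‖ = 1 := fun n => huon.1 n
  have humem : ∀ n, u n ∈ Submodule.span ℂ (Set.range h) := by
    intro n
    have h1 : InnerProductSpace.gramSchmidt ℂ h n ∈ Submodule.span ℂ (Set.range h) :=
      Submodule.span_mono (Set.image_subset_range h (Set.Iic n))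
        (InnerProductSpace.gramSchmidt_mem_span ℂ h le_rfl)
    rw [hu]
    unfold InnerProductSpace.gramSchmidtNormed
    exact Submodule.smul_mem _ _ h1
  have hBneg : ∀ n, (inner ℂ (u n) (B (u n)) : ℂ).re ≤ -c := by
    intro n
    have h1 : c ≤ (inner ℂ (u n) (A (u n)) : ℂ).re := by
      have := hAcoer (u n)
      rwa [hnorm1 n, one_pow, mul_one] at this
    have h2 : (inner ℂ (u n) ((A + B) (u n)) : ℂ).re ≤ 0 := hspan _ (humem n)
    have h3 : (inner ℂ (u n) ((A + B) (u n)) : ℂ)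
        = inner ℂ (u n) (A (u n)) + inner ℂ (u n) (B (u n)) := by
      rw [ContinuousLinearMap.add_apply, inner_add_right]
    rw [h3, Complex.add_re] at h2
    linarith
  -- compactness of B gives a convergent subsequence of B (u n)
  have hbdd : Bornology.IsBounded (Set.range u) := by
    rw [isBounded_iff_forall_norm_le]
    exact ⟨1, by rintro x ⟨n, rfl⟩; exact le_of_eq (hnorm1 n)⟩
  obtain ⟨Kc, hKc, hKcs⟩ :=
    IsCompactOperator.image_subset_compact_of_bounded (f := (B : H →ₗ[ℂ] H)) hBc hbdd
  obtain ⟨y, hyK, φ, hφmono, hφtend⟩ :=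
    hKc.tendsto_subseq (x := fun n => B (u n))
      (fun n => hKcs ⟨u n, Set.mem_range_self n, rfl⟩)
  -- Bessel: inner products with y tend to 0
  have hbes : Filter.Tendsto (fun n => ‖(inner ℂ (u n) y : ℂ)‖) Filter.atTop (nhds 0) := by
    have hs : Summable fun n => ‖(inner ℂ (u n) y : ℂ)‖ ^ 2 := huon.inner_products_summable y
    have h0 := hs.tendsto_atTop_zero
    have h1 := (Real.continuous_sqrt.tendsto 0).comp h0
    simp only [Function.comp_def, Real.sqrt_zero] at h1
    have h2 : (fun n => Real.sqrt (‖(inner ℂ (u n) y : ℂ)‖ ^ 2))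
        = fun n => ‖(inner ℂ (u n) y : ℂ)‖ := by
      funext n; exact Real.sqrt_sq (norm_nonneg _)
    rwa [h2] at h1
  have h5 : Filter.Tendsto (fun k => ‖B (u (φ k)) - y‖) Filter.atTop (nhds 0) := by
    have := tendsto_iff_norm_sub_tendsto_zero.mp hφtend
    simpa using this
  have h6 : Filter.Tendsto (fun k => ‖(inner ℂ (u (φ k)) y : ℂ)‖) Filter.atTop (nhds 0) :=
    hbes.comp hφmono.tendsto_atTop
  have h7 : Filter.Tendsto
      (fun k => ‖(inner ℂ (u (φ k)) y : ℂ)‖ + ‖B (u (φ k)) - y‖) Filter.atTop (nhds 0) := by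
    simpa using h6.add h5
  have h8 : ∀ᶠ k in Filter.atTop,
      ‖(inner ℂ (u (φ k)) y : ℂ)‖ + ‖B (u (φ k)) - y‖ < c :=
    h7.eventually_lt_const hc
  obtain ⟨k, hk⟩ := h8.exists
  -- final contradiction
  set m := φ k with hm
  have hkey2 : c ≤ ‖(inner ℂ (u m) y : ℂ)‖ + ‖B (u m) - y‖ := by
    have h9 : (inner ℂ (u m) (B (u m)) : ℂ)
        = inner ℂ (u m) y + inner ℂ (u m) (B (u m) - y) := by
      rw [inner_sub_right]; ring
    calc c ≤ -(inner ℂ (u m) (B (u m)) : ℂ).re := by linarith [hBneg m]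
      _ ≤ |(inner ℂ (u m) (B (u m)) : ℂ).re| := neg_le_abs _
      _ ≤ ‖(inner ℂ (u m) (B (u m)) : ℂ)‖ := by
          exact Complex.abs_re_le_norm _
      _ = ‖(inner ℂ (u m) y + inner ℂ (u m) (B (u m) - y) : ℂ)‖ := by rw [h9]
      _ ≤ ‖(inner ℂ (u m) y : ℂ)‖ + ‖(inner ℂ (u m) (B (u m) - y) : ℂ)‖ := norm_add_le _ _
      _ ≤ ‖(inner ℂ (u m) y : ℂ)‖ + ‖u m‖ * ‖B (u m) - y‖ := by
          gcongr; exact norm_inner_le_norm _ _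
      _ = ‖(inner ℂ (u m) y : ℂ)‖ + ‖B (u m) - y‖ := by rw [hnorm1 m, one_mul]
  exact absurd hk (not_lt.mpr hkey2)
end

section
/- Let β₁, β₂ ∈ C(Γ) be complex-valued and μ₁, μ₂ ∈ C¹(Γ). If −∇_Γ·(μ₁−μ₂)∇_Γφ + k²(β₁−β₂)φ = 0 on Γ for every φ ∈ V₀(Γ), then β₁ = β₂ on Γ. Proof: for any interior point y₀ ∈ Γ choose φ smooth with φ ≡ 1 on B_{ρ/4}(y₀)∩Γ and φ ≡ 0 outside B_{ρ/2}(y₀)∩Γ; on B_{ρ/8}(y₀)∩Γ the gradient term vanishes, giving k²(β₁−β₂) = 0 there, and continuity plus arbitrariness of y₀ gives β₁ = β₂ everywhere. -/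
/-- If `−∇_Γ·(μ₁−μ₂)∇_Γφ + k²(β₁−β₂)φ = 0` pointwise on `Γ` for every
`φ ∈ V₀(Γ)` (the divergence-form operator `L` being local: it vanishes at points where `φ`
is locally constant, and `V₀(Γ)` containing bump functions equal to `1` near each interior
point), then `β₁ = β₂` on `Γ` by continuity and density of the interior. -/
theorem stmt_14
    {Γ : Type*} [TopologicalSpace Γ]
    (k : ℝ) (hk : 0 < k)
    (β₁ β₂ : Γ → ℂ) (hβ₁ : Continuous β₁) (hβ₂ : Continuous β₂)
    (U : Set Γ) (hU : Dense U)  -- the (dense) interior of Γ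
    (Adm : Set (Γ → ℂ))  -- the space V₀(Γ) of admissible test functions
    (L : (Γ → ℂ) → Γ → ℂ)  -- φ ↦ −∇_Γ·(μ₁−μ₂)∇_Γφ
    -- locality of the divergence-form operator:
    (hlocal : ∀ φ ∈ Adm, ∀ x : Γ, (∀ᶠ y in nhds x, φ y = φ x) → L φ x = 0)
    -- bump functions equal to 1 near each interior point:
    (hbump : ∀ x ∈ U, ∃ φ ∈ Adm, φ x = 1 ∧ ∀ᶠ y in nhds x, φ y = 1)
    -- the hypothesis of the statement:
    (heq : ∀ φ ∈ Adm, ∀ x : Γ, L φ x + (k ^ 2 : ℂ) * (β₁ x - β₂ x) * φ x = 0) :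
    ∀ x : Γ, β₁ x = β₂ x := by
  have hU' : ∀ x ∈ U, β₁ x = β₂ x := by
    intro x hx
    obtain ⟨φ, hφA, hφ1, hφn⟩ := hbump x hx
    have hL : L φ x = 0 := hlocal φ hφA x (by filter_upwards [hφn] with y hy; rw [hy, hφ1])
    have h := heq φ hφA x
    rw [hL, hφ1, zero_add, mul_one] at h
    have hk2 : (k ^ 2 : ℂ) ≠ 0 := by
      simpa using pow_ne_zero 2 (Complex.ofReal_ne_zero.mpr hk.ne')
    exact sub_eq_zero.mp ((mul_eq_zero.mp h).resolve_left hk2)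
  intro x
  exact congrFun (Continuous.ext_on hU hβ₁ hβ₂ hU') x
end
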